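/- arXiv:2009.09252 — 3 statements merged into one kernel-verified Lean document; each statement's English description precedes it below -/
import Mathlib

section
/- For every a in the open unit disk 𝔻 and every integer k ≥ 1, the integral J(a) = ∫_{𝔻} |ξ|^{2/k - 2} / |1 - ξ·a|⁴ dA(ξ) (with respect to Lebesgue area measure) satisfies J(a) ≤ C·(1 - |a|²)^{-2} for a constant C depending only on k. -/
open Complex MeasureTheory

noncomputable section

open Set Metric

namespace ForelliAux

/-- integrability of |x|^c on [-1,1] for c > -1 -/
lemma integrable_abs_rpow {c : ℝ} (hc : -1 < c) :
    IntegrableOn (fun x : ℝ => |x| ^ c) (Icc (-1 : ℝ) 1) := by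
  have h01 : IntegrableOn (fun x : ℝ => |x| ^ c) (Icc (0 : ℝ) 1) := by
    rw [integrableOn_Icc_iff_integrableOn_Ioc]
    have h := intervalIntegral.intervalIntegrable_rpow' (a := 0) (b := 1) hc
    rw [intervalIntegrable_iff] at h
    have h2 : IntegrableOn (fun x : ℝ => x ^ c) (Ioc (0:ℝ) 1) := by
      simpa [uIoc_of_le (by norm_num : (0:ℝ) ≤ 1)] using h
    exact h2.congr_fun (fun x hx => by rw [abs_of_pos hx.1]) measurableSet_Ioc
  have hneg : IntegrableOn (fun x : ℝ => |x| ^ c) (Icc (-1 : ℝ) 0) := by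
    have h := (Measure.measurePreserving_neg (volume : Measure ℝ)).integrableOn_comp_preimage
      (Homeomorph.neg ℝ).measurableEmbedding
      (f := fun x : ℝ => |x| ^ c) (s := Icc (-1:ℝ) 0)
    have hpre : (Neg.neg ⁻¹' (Icc (-1:ℝ) 0) : Set ℝ) = Icc 0 1 := by
      ext x
      simp only [mem_preimage, mem_Icc]
      constructor
      · rintro ⟨h1, h2⟩; constructor <;> linarith
      · rintro ⟨h1, h2⟩; constructor <;> linarith
    have hcomp : ((fun x : ℝ => |x| ^ c) ∘ Neg.neg) = fun x : ℝ => |x| ^ c := by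
      funext x; simp [Function.comp, abs_neg]
    rw [hpre, hcomp] at h
    exact h.mp h01
  have := hneg.union h01
  rwa [Icc_union_Icc_eq_Icc (by norm_num : (-1:ℝ) ≤ 0) (by norm_num : (0:ℝ) ≤ 1)] at this

lemma nullset : (volume : Measure ℂ) {ξ : ℂ | ξ.re = 0 ∨ ξ.im = 0} = 0 := by
  have hsm : MeasurableSet {p : ℝ × ℝ | p.1 = 0 ∨ p.2 = 0} := by
    exact (measurable_fst (measurableSet_singleton 0)).union
      (measurable_snd (measurableSet_singleton 0))
  have hs : {ξ : ℂ | ξ.re = 0 ∨ ξ.im = 0}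
      = Complex.measurableEquivRealProd ⁻¹' {p : ℝ × ℝ | p.1 = 0 ∨ p.2 = 0} := rfl
  rw [hs, Complex.volume_preserving_equiv_real_prod.measure_preimage hsm.nullMeasurableSet]
  have hsub : {p : ℝ × ℝ | p.1 = 0 ∨ p.2 = 0} ⊆ (({0} : Set ℝ) ×ˢ univ) ∪ (univ ×ˢ ({0} : Set ℝ)) := by
    rintro ⟨x, y⟩ (h | h) <;> simp_all
  refine measure_mono_null hsub ?_
  rw [Measure.volume_eq_prod]
  have h1 : (volume.prod volume) (({0} : Set ℝ) ×ˢ (univ : Set ℝ)) = 0 := by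
    rw [Measure.prod_prod]; simp
  have h2 : (volume.prod volume) ((univ : Set ℝ) ×ˢ ({0} : Set ℝ)) = 0 := by
    rw [Measure.prod_prod]; simp
  exact measure_union_null h1 h2

lemma integrable_inv_sq_add {u α : ℝ} (hu : 0 < u) (hα : 0 < α) :
    Integrable (fun y : ℝ => (u^2 + (α*y)^2)⁻¹) := by
  have key : ∀ y : ℝ, (u^2 + (α*y)^2)⁻¹ = (u^2)⁻¹ * (1 + ((α/u) * y)^2)⁻¹ := by
    intro y
    rw [← mul_inv]
    congr 1
    field_simp
  simp_rw [key]
  apply Integrable.const_mul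
  exact integrable_inv_one_add_sq.comp_mul_left' (by positivity : (α/u) ≠ 0)

lemma integral_inv_sq_add {u α : ℝ} (hu : 0 < u) (hα : 0 < α) :
    (∫ y : ℝ, (u^2 + (α*y)^2)⁻¹) = Real.pi / (u * α) := by
  have key : ∀ y : ℝ, (u^2 + (α*y)^2)⁻¹ = (u^2)⁻¹ * (1 + ((α/u) * y)^2)⁻¹ := by
    intro y
    rw [← mul_inv]
    congr 1
    field_simp
  simp_rw [key]
  rw [MeasureTheory.integral_const_mul]
  rw [Measure.integral_comp_mul_left (fun x : ℝ => (1 + x^2)⁻¹) (α/u)]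
  rw [integral_univ_inv_one_add_sq, smul_eq_mul,
    abs_of_pos (by positivity : (0:ℝ) < (α/u)⁻¹)]
  field_simp
  try ring

lemma inner_bound {u α : ℝ} (hu : 0 < u) (hα : 0 < α) :
    ∫ y in Icc (-1:ℝ) 1, ((u^2 + (α*y)^2)^2)⁻¹ ≤ Real.pi / (u^3 * α) := by
  have hcont : Continuous fun y : ℝ => ((u^2 + (α*y)^2)^2)⁻¹ := by
    apply Continuous.inv₀ (by continuity)
    intro y; positivity
  have h1 : ∫ y in Icc (-1:ℝ) 1, ((u^2 + (α*y)^2)^2)⁻¹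
      ≤ ∫ y in Icc (-1:ℝ) 1, (u^2)⁻¹ * (u^2 + (α*y)^2)⁻¹ := by
    apply setIntegral_mono_on
    · exact hcont.integrableOn_Icc
    · exact ((integrable_inv_sq_add hu hα).const_mul _).integrableOn
    · exact measurableSet_Icc
    · intro y _
      rw [← mul_inv]
      apply inv_anti₀ (by positivity)
      have h : u^2 ≤ u^2 + (α*y)^2 := by nlinarith [sq_nonneg (α*y)]
      nlinarith [sq_nonneg (α*y), sq_nonneg u]
  have h2 : ∫ y in Icc (-1:ℝ) 1, (u^2)⁻¹ * (u^2 + (α*y)^2)⁻¹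
      ≤ ∫ y : ℝ, (u^2)⁻¹ * (u^2 + (α*y)^2)⁻¹ := by
    apply setIntegral_le_integral ((integrable_inv_sq_add hu hα).const_mul _)
    filter_upwards with y
    positivity
  have h3 : (∫ y : ℝ, (u^2)⁻¹ * (u^2 + (α*y)^2)⁻¹) = Real.pi / (u^3 * α) := by
    rw [MeasureTheory.integral_const_mul, integral_inv_sq_add hu hα]
    rw [eq_div_iff (by positivity : u^3*α ≠ 0)]
    rw [show (u^2)⁻¹ * (Real.pi / (u * α)) * (u ^ 3 * α)
        = Real.pi * ((u*α) / (u*α)) * ((u^2) / (u^2)) by ring]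
    rw [div_self (by positivity : u*α ≠ 0), div_self (by positivity : u^2 ≠ 0)]
    ring
  linarith

lemma outer_bound {α : ℝ} (hα : 0 < α) (hα1 : α < 1) :
    ∫ x in Icc (-1:ℝ) 1, ((1 - α*x)^3)⁻¹ ≤ ((1-α)^2)⁻¹ / α := by
  have hpos : ∀ x ∈ uIcc (-1:ℝ) 1, 0 < 1 - α * x := by
    intro x hx
    rw [uIcc_of_le (by norm_num : (-1:ℝ) ≤ 1), mem_Icc] at hx
    nlinarith [hx.1, hx.2]
  have hderiv : ∀ x ∈ uIcc (-1:ℝ) 1,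
      HasDerivAt (fun x : ℝ => ((1-α*x)^2)⁻¹ / (2*α)) (((1-α*x)^3)⁻¹) x := by
    intro x hx
    have h0 : (1 - α*x) ≠ 0 := (hpos x hx).ne'
    have h1 : HasDerivAt (fun x : ℝ => 1 - α*x) (-α) x := by
      simpa using ((hasDerivAt_id x).const_mul α).const_sub 1
    have h2 := (h1.pow 2).inv (pow_ne_zero 2 h0)
    have h3 := h2.div_const (2*α)
    refine h3.congr_deriv ?_
    simp only [Pi.pow_apply]
    field_simp
    ring
  have hcont : IntervalIntegrable (fun x : ℝ => ((1-α*x)^3)⁻¹) volume (-1) 1 := by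
    apply ContinuousOn.intervalIntegrable
    apply ContinuousOn.inv₀
    · fun_prop
    · intro x hx
      exact pow_ne_zero 3 (hpos x hx).ne'
  have hFTC := intervalIntegral.integral_eq_sub_of_hasDerivAt hderiv hcont
  have heq : ∫ x in Icc (-1:ℝ) 1, ((1 - α*x)^3)⁻¹
      = ∫ x in (-1:ℝ)..1, ((1 - α*x)^3)⁻¹ := by
    rw [intervalIntegral.integral_of_le (by norm_num : (-1:ℝ) ≤ 1),
      MeasureTheory.integral_Icc_eq_integral_Ioc]
  rw [heq, hFTC]
  have h1 : (0:ℝ) ≤ ((1-α*(-1))^2)⁻¹ / (2*α) := by positivity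
  have h2 : ((1-α*(1:ℝ))^2)⁻¹ / (2*α) ≤ ((1-α)^2)⁻¹ / α := by
    rw [mul_one]
    apply div_le_div_of_nonneg_left (by positivity) hα
    linarith
  linarith


variable {k : ℕ}

/-- the 1D weight majorant -/
def Fw (k : ℕ) : ℝ → ℝ := indicator (Icc (-1:ℝ) 1) (fun x => |x| ^ ((1:ℝ)/(k:ℝ) - 1))

def IFw (k : ℕ) : ℝ := ∫ x : ℝ, Fw k x

/-- 2D weight majorant -/
def Ww (k : ℕ) : ℂ → ℝ := fun ξ => Fw k ξ.re * Fw k ξ.im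

lemma hc_gt (hk : 1 ≤ k) : (-1:ℝ) < (1:ℝ)/(k:ℝ) - 1 := by
  have : (0:ℝ) < (k:ℝ) := by exact_mod_cast hk
  have : (0:ℝ) < 1/(k:ℝ) := by positivity
  linarith

lemma hc_le (hk : 1 ≤ k) : (1:ℝ)/(k:ℝ) - 1 ≤ 0 := by
  have h1 : (1:ℝ) ≤ (k:ℝ) := by exact_mod_cast hk
  have : (1:ℝ)/(k:ℝ) ≤ 1 := by
    rw [div_le_one (by linarith)]; exact h1
  linarith

lemma Fw_integrable (hk : 1 ≤ k) : Integrable (Fw k) :=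
  (integrable_indicator_iff measurableSet_Icc).2 (integrable_abs_rpow (hc_gt hk))

lemma Fw_nonneg (x : ℝ) : 0 ≤ Fw k x :=
  indicator_nonneg (fun y _ => Real.rpow_nonneg (abs_nonneg y) _) x

lemma IFw_nonneg (k : ℕ) : 0 ≤ IFw k := integral_nonneg Fw_nonneg

lemma Ww_nonneg (k : ℕ) (ξ : ℂ) : 0 ≤ Ww k ξ := mul_nonneg (Fw_nonneg _) (Fw_nonneg _)

lemma Ww_integrable (hk : 1 ≤ k) : Integrable (Ww k) := by
  have h : Integrable (fun p : ℝ × ℝ => Fw k p.1 * Fw k p.2)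
      (volume : Measure (ℝ × ℝ)) := by
    rw [Measure.volume_eq_prod]
    exact (Fw_integrable hk).mul_prod (Fw_integrable hk)
  exact (Complex.volume_preserving_equiv_real_prod.integrable_comp_emb
    Complex.measurableEquivRealProd.measurableEmbedding).2 h

lemma Ww_integral (hk : 1 ≤ k) : ∫ ξ : ℂ, Ww k ξ = IFw k * IFw k := by
  have h := Complex.volume_preserving_equiv_real_prod.integral_comp
    Complex.measurableEquivRealProd.measurableEmbedding
    (fun p : ℝ × ℝ => Fw k p.1 * Fw k p.2)
  calc ∫ ξ : ℂ, Ww k ξ = ∫ p : ℝ × ℝ, Fw k p.1 * Fw k p.2 := h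
    _ = IFw k * IFw k := by
        rw [Measure.volume_eq_prod]
        exact integral_prod_mul (Fw k) (Fw k)

/-- a.e. on the ball, the rpow weight is dominated by the product majorant -/
lemma weight_ae (hk : 1 ≤ k) :
    ∀ᵐ ξ : ℂ, ξ ∈ ball (0:ℂ) 1 → ‖ξ‖ ^ ((2:ℝ)/(k:ℝ) - 2) ≤ Ww k ξ := by
  have hae : ∀ᵐ ξ : ℂ, ¬(ξ.re = 0 ∨ ξ.im = 0) := by
    rw [ae_iff]
    refine measure_mono_null ?_ nullset
    intro ξ hξ
    simp only [mem_setOf_eq] at hξ ⊢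
    tauto
  filter_upwards [hae] with ξ hξ0 hξ
  push_neg at hξ0
  obtain ⟨hre, him⟩ := hξ0
  set c : ℝ := (1:ℝ)/(k:ℝ) - 1 with hc_def
  have hc0 : c ≤ 0 := hc_le hk
  have hnlt : ‖ξ‖ < 1 := mem_ball_zero_iff.1 hξ
  have hx1 : |ξ.re| ≤ 1 := le_trans (Complex.abs_re_le_norm ξ) (le_of_lt hnlt)
  have hy1 : |ξ.im| ≤ 1 := le_trans (Complex.abs_im_le_norm ξ) (le_of_lt hnlt)
  have hFx : Fw k ξ.re = |ξ.re| ^ c := by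
    rw [Fw, indicator_of_mem (mem_Icc.2 ⟨(abs_le.1 hx1).1, (abs_le.1 hx1).2⟩)]
  have hFy : Fw k ξ.im = |ξ.im| ^ c := by
    rw [Fw, indicator_of_mem (mem_Icc.2 ⟨(abs_le.1 hy1).1, (abs_le.1 hy1).2⟩)]
  have hsc : (2:ℝ)/(k:ℝ) - 2 = 2 * c := by rw [hc_def]; ring
  have hxypos : 0 < |ξ.re| * |ξ.im| := by
    apply mul_pos <;> simpa [abs_pos]
  have h2 : 2 * (|ξ.re| * |ξ.im|) ≤ ‖ξ‖^(2:ℕ) := by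
    have : ‖ξ‖^(2:ℕ) = ξ.re^2 + ξ.im^2 := by
      rw [Complex.sq_norm, Complex.normSq_apply]; ring
    rw [this]
    nlinarith [sq_nonneg (|ξ.re| - |ξ.im|), _root_.sq_abs ξ.re, _root_.sq_abs ξ.im]
  calc ‖ξ‖ ^ ((2:ℝ)/(k:ℝ) - 2) = (‖ξ‖^(2:ℕ)) ^ c := by
        rw [hsc, ← Real.rpow_natCast ‖ξ‖ 2, ← Real.rpow_mul (norm_nonneg ξ)]
        norm_num
    _ ≤ (2 * (|ξ.re| * |ξ.im|)) ^ c :=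
        Real.rpow_le_rpow_of_nonpos (by positivity) h2 hc0
    _ = (2:ℝ) ^ c * (|ξ.re| * |ξ.im|) ^ c :=
        Real.mul_rpow (by norm_num) (le_of_lt hxypos)
    _ ≤ 1 * (|ξ.re| * |ξ.im|) ^ c := by
        apply mul_le_mul_of_nonneg_right _ (Real.rpow_nonneg (le_of_lt hxypos) c)
        exact Real.rpow_le_one_of_one_le_of_nonpos (by norm_num) hc0
    _ = |ξ.re| ^ c * |ξ.im| ^ c := by
        rw [one_mul, Real.mul_rpow (abs_nonneg _) (abs_nonneg _)]
    _ = Ww k ξ := by rw [Ww, hFx, hFy]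

lemma norm_quad (α : ℝ) (η : ℂ) :
    ‖1 - η * (α:ℂ)‖^4 = ((1 - α*η.re)^2 + (α*η.im)^2)^2 := by
  have h2 : ‖1 - η * (α:ℂ)‖^2 = (1 - α*η.re)^2 + (α*η.im)^2 := by
    rw [Complex.sq_norm, Complex.normSq_apply]
    simp [Complex.sub_re, Complex.sub_im, Complex.mul_re, Complex.mul_im]
    ring
  calc ‖1 - η * (α:ℂ)‖^4 = (‖1 - η * (α:ℂ)‖^2)^2 := by ring
    _ = ((1 - α*η.re)^2 + (α*η.im)^2)^2 := by rw [h2]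




lemma hs_le (hk : 1 ≤ k) : (2:ℝ)/(k:ℝ) - 2 ≤ 0 := by
  have h1 : (1:ℝ) ≤ (k:ℝ) := by exact_mod_cast hk
  have : (2:ℝ)/(k:ℝ) ≤ 2 := by rw [div_le_iff₀ (by linarith)]; nlinarith
  linarith

lemma hs_ge (hk : 1 ≤ k) : (-2:ℝ) ≤ (2:ℝ)/(k:ℝ) - 2 := by
  have h1 : (1:ℝ) ≤ (k:ℝ) := by exact_mod_cast hk
  have : (0:ℝ) ≤ 2/(k:ℝ) := by positivity
  linarith

/-- Case A : `‖a‖ ≤ 1/2`. -/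
lemma boundA (hk : 1 ≤ k) {a : ℂ} (ha : ‖a‖ ≤ 1/2) :
    ∫ ξ in ball (0:ℂ) 1, ‖ξ‖ ^ ((2:ℝ)/(k:ℝ) - 2) / ‖1 - ξ * a‖^4
      ≤ 16 * (IFw k * IFw k) := by
  have hb : ∀ᵐ ξ ∂(volume.restrict (ball (0:ℂ) 1)),
      ‖ξ‖ ^ ((2:ℝ)/(k:ℝ) - 2) / ‖1 - ξ * a‖^4 ≤ 16 * Ww k ξ := by
    filter_upwards [(ae_restrict_iff' measurableSet_ball).2 (weight_ae hk),
      ae_restrict_mem measurableSet_ball] with ξ hw' hξ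
    have hξ1 : ‖ξ‖ < 1 := mem_ball_zero_iff.1 hξ
    have h1 : (1:ℝ)/2 ≤ ‖1 - ξ*a‖ := by
      have hξa : ‖ξ*a‖ ≤ 1/2 := by
        rw [norm_mul]
        nlinarith [norm_nonneg ξ, norm_nonneg a]
      calc (1:ℝ)/2 = 1 - 1/2 := by norm_num
        _ ≤ 1 - ‖ξ*a‖ := by linarith
        _ ≤ ‖1 - ξ*a‖ := by simpa using norm_sub_norm_le (1:ℂ) (ξ*a)
    have h4 : (1:ℝ)/16 ≤ ‖1 - ξ*a‖^4 := by
      calc (1:ℝ)/16 = (1/2:ℝ)^4 := by norm_num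
        _ ≤ ‖1 - ξ*a‖^4 := pow_le_pow_left₀ (by norm_num) h1 4
    calc ‖ξ‖ ^ ((2:ℝ)/(k:ℝ) - 2) / ‖1 - ξ*a‖^4
        ≤ ‖ξ‖ ^ ((2:ℝ)/(k:ℝ) - 2) / (1/16) :=
          div_le_div_of_nonneg_left (Real.rpow_nonneg (norm_nonneg ξ) _) (by norm_num) h4
      _ = 16 * ‖ξ‖ ^ ((2:ℝ)/(k:ℝ) - 2) := by ring
      _ ≤ 16 * Ww k ξ := by linarith
  calc ∫ ξ in ball (0:ℂ) 1, ‖ξ‖ ^ ((2:ℝ)/(k:ℝ) - 2) / ‖1 - ξ * a‖^4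
      ≤ ∫ ξ in ball (0:ℂ) 1, 16 * Ww k ξ :=
        integral_mono_of_nonneg (ae_of_all _ fun ξ => by positivity)
          (((Ww_integrable hk).const_mul 16).integrableOn) hb
    _ ≤ ∫ ξ : ℂ, 16 * Ww k ξ :=
        setIntegral_le_integral ((Ww_integrable hk).const_mul 16)
          (ae_of_all _ fun ξ => by
            have := Ww_nonneg k ξ; positivity)
    _ = 16 * (IFw k * IFw k) := by
        rw [MeasureTheory.integral_const_mul, Ww_integral hk]

/-- Case B : `1/2 < α < 1`, real direction. -/
lemma boundB (hk : 1 ≤ k) {α : ℝ} (hα : 1/2 < α) (hα1 : α < 1) :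
    ∫ ξ in ball (0:ℂ) 1, ‖ξ‖ ^ ((2:ℝ)/(k:ℝ) - 2) / ‖1 - ξ * (α:ℂ)‖^4
      ≤ 16 * (IFw k * IFw k) + 16 * Real.pi * ((1-α)^2)⁻¹ := by
  have hα0 : (0:ℝ) < α := by linarith
  set Hf : ℝ×ℝ → ℝ := indicator ((Icc (-1:ℝ) 1) ×ˢ (Icc (-1:ℝ) 1))
    (fun p => (((1-α*p.1)^2 + (α*p.2)^2)^2)⁻¹) with hHf_def
  set h2f : ℂ → ℝ := fun η => Hf (η.re, η.im) with hh2_def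
  have hHf_nonneg : ∀ p, 0 ≤ Hf p := fun p => indicator_nonneg (fun q _ => by positivity) p
  have hQmeas : MeasurableSet ((Icc (-1:ℝ) 1) ×ˢ (Icc (-1:ℝ) 1)) :=
    measurableSet_Icc.prod measurableSet_Icc
  -- integrability of Hf
  have hGint : Integrable (fun p : ℝ×ℝ =>
      ((Icc (-1:ℝ) 1).indicator (fun _ => (1:ℝ)) p.1) *
      ((Icc (-1:ℝ) 1).indicator (fun _ => (1:ℝ)) p.2)) (volume : Measure (ℝ×ℝ)) := by
    rw [Measure.volume_eq_prod]
    apply Integrable.mul_prod <;>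
      exact (integrable_indicator_iff measurableSet_Icc).2
        (integrableOn_const (by rw [Real.volume_Icc]; simp))
  have hHf_meas : Measurable Hf := by
    apply Measurable.indicator _ hQmeas
    apply Measurable.inv
    fun_prop
  have hHf_int : Integrable Hf := by
    apply Integrable.mono' (hGint.const_mul (((1-α)^4)⁻¹)) hHf_meas.aestronglyMeasurable
    filter_upwards with p
    rw [Real.norm_eq_abs, _root_.abs_of_nonneg (hHf_nonneg p)]
    by_cases hp : p ∈ (Icc (-1:ℝ) 1) ×ˢ (Icc (-1:ℝ) 1)
    · rw [hHf_def, indicator_of_mem hp]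
      have hp1 : p.1 ≤ 1 := hp.1.2
      have hposu : (0:ℝ) < 1 - α := by linarith
      have h1 : 1 - α ≤ 1 - α * p.1 := by nlinarith
      have hD : (1-α)^4 ≤ ((1-α*p.1)^2 + (α*p.2)^2)^2 := by
        have e1 : (1-α)^2 ≤ (1-α*p.1)^2 + (α*p.2)^2 := by
          nlinarith [sq_nonneg (α*p.2)]
        calc (1-α)^4 = ((1-α)^2)^2 := by ring
          _ ≤ ((1-α*p.1)^2 + (α*p.2)^2)^2 := pow_le_pow_left₀ (sq_nonneg _) e1 2
      calc (((1-α*p.1)^2+(α*p.2)^2)^2)⁻¹ ≤ ((1-α)^4)⁻¹ := inv_anti₀ (by positivity) hD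
        _ = ((1-α)^4)⁻¹ * ((Icc (-1:ℝ) 1).indicator (fun _ => (1:ℝ)) p.1 *
              (Icc (-1:ℝ) 1).indicator (fun _ => (1:ℝ)) p.2) := by
            rw [indicator_of_mem hp.1, indicator_of_mem hp.2]; ring
    · rw [hHf_def, indicator_of_notMem hp]
      exact mul_nonneg (by positivity)
        (mul_nonneg (indicator_nonneg (fun _ _ => one_pos.le) _)
          (indicator_nonneg (fun _ _ => one_pos.le) _))
  have hh2_int : Integrable h2f :=
    (Complex.volume_preserving_equiv_real_prod.integrable_comp_emb
      Complex.measurableEquivRealProd.measurableEmbedding).2 hHf_int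
  have hh2_nonneg : ∀ ξ, 0 ≤ h2f ξ := fun ξ => hHf_nonneg _
  -- pointwise bound on the ball
  have hkey : ∀ᵐ ξ ∂(volume.restrict (ball (0:ℂ) 1)),
      ‖ξ‖ ^ ((2:ℝ)/(k:ℝ) - 2) / ‖1 - ξ * (α:ℂ)‖^4 ≤ 16 * Ww k ξ + 4 * h2f ξ := by
    filter_upwards [(ae_restrict_iff' measurableSet_ball).2 (weight_ae hk),
      ae_restrict_mem measurableSet_ball] with ξ hw' hξ
    have hξ1 : ‖ξ‖ < 1 := mem_ball_zero_iff.1 hξ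
    have hre1 : |ξ.re| ≤ 1 := le_trans (Complex.abs_re_le_norm ξ) (le_of_lt hξ1)
    have him1 : |ξ.im| ≤ 1 := le_trans (Complex.abs_im_le_norm ξ) (le_of_lt hξ1)
    by_cases hsmall : ‖ξ‖ ≤ 1/2
    · have h1 : (1:ℝ)/2 ≤ ‖1 - ξ*(α:ℂ)‖ := by
        have hξa : ‖ξ*(α:ℂ)‖ ≤ 1/2 := by
          rw [norm_mul, Complex.norm_real, Real.norm_eq_abs, _root_.abs_of_pos hα0]
          nlinarith [norm_nonneg ξ]
        calc (1:ℝ)/2 = 1 - 1/2 := by norm_num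
          _ ≤ 1 - ‖ξ*(α:ℂ)‖ := by linarith
          _ ≤ ‖1 - ξ*(α:ℂ)‖ := by simpa using norm_sub_norm_le (1:ℂ) (ξ*(α:ℂ))
      have h4 : (1:ℝ)/16 ≤ ‖1 - ξ*(α:ℂ)‖^4 := by
        calc (1:ℝ)/16 = (1/2:ℝ)^4 := by norm_num
          _ ≤ ‖1 - ξ*(α:ℂ)‖^4 := pow_le_pow_left₀ (by norm_num) h1 4
      calc ‖ξ‖ ^ ((2:ℝ)/(k:ℝ) - 2) / ‖1 - ξ*(α:ℂ)‖^4
          ≤ ‖ξ‖ ^ ((2:ℝ)/(k:ℝ) - 2) / (1/16) :=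
            div_le_div_of_nonneg_left (Real.rpow_nonneg (norm_nonneg ξ) _) (by norm_num) h4
        _ = 16 * ‖ξ‖ ^ ((2:ℝ)/(k:ℝ) - 2) := by ring
        _ ≤ 16 * Ww k ξ := by linarith
        _ ≤ 16 * Ww k ξ + 4 * h2f ξ := by
            have := hh2_nonneg ξ; linarith
    · push_neg at hsmall
      have hmem : (ξ.re, ξ.im) ∈ (Icc (-1:ℝ) 1) ×ˢ (Icc (-1:ℝ) 1) :=
        ⟨mem_Icc.2 ⟨(abs_le.1 hre1).1, (abs_le.1 hre1).2⟩,
         mem_Icc.2 ⟨(abs_le.1 him1).1, (abs_le.1 him1).2⟩⟩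
      have hh2val : h2f ξ = (((1-α*ξ.re)^2+(α*ξ.im)^2)^2)⁻¹ := by
        rw [hh2_def]
        exact indicator_of_mem hmem _
      have hDpos : (0:ℝ) < ((1-α*ξ.re)^2+(α*ξ.im)^2)^2 := by
        have h0 : (0:ℝ) < 1 - α*ξ.re := by nlinarith [(abs_le.1 hre1).2, (abs_le.1 hre1).1]
        positivity
      have hnum : ‖ξ‖ ^ ((2:ℝ)/(k:ℝ) - 2) ≤ 4 := by
        calc ‖ξ‖ ^ ((2:ℝ)/(k:ℝ) - 2) ≤ (1/2:ℝ) ^ ((2:ℝ)/(k:ℝ) - 2) :=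
              Real.rpow_le_rpow_of_nonpos (by norm_num) (le_of_lt hsmall) (hs_le hk)
          _ ≤ (1/2:ℝ) ^ (-2:ℝ) :=
              Real.rpow_le_rpow_of_exponent_ge (by norm_num) (by norm_num) (hs_ge hk)
          _ = 4 := by
              rw [show (-2:ℝ) = ((-2:ℤ):ℝ) by norm_num, Real.rpow_intCast]
              norm_num
      calc ‖ξ‖ ^ ((2:ℝ)/(k:ℝ) - 2) / ‖1 - ξ*(α:ℂ)‖^4
          ≤ 4 / ‖1 - ξ*(α:ℂ)‖^4 := by
            have hpos : (0:ℝ) < ‖1 - ξ*(α:ℂ)‖^4 := by rw [norm_quad]; exact hDpos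
            gcongr
        _ = 4 * h2f ξ := by rw [norm_quad, hh2val, div_eq_mul_inv]
        _ ≤ 16 * Ww k ξ + 4 * h2f ξ := by
            have := Ww_nonneg k ξ; linarith
  -- integral chain
  have hBint : Integrable (fun ξ => 16 * Ww k ξ + 4 * h2f ξ) :=
    ((Ww_integrable hk).const_mul 16).add (hh2_int.const_mul 4)
  have step12 : ∫ ξ in ball (0:ℂ) 1, ‖ξ‖ ^ ((2:ℝ)/(k:ℝ) - 2) / ‖1 - ξ * (α:ℂ)‖^4
      ≤ ∫ ξ : ℂ, (16 * Ww k ξ + 4 * h2f ξ) := by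
    calc ∫ ξ in ball (0:ℂ) 1, ‖ξ‖ ^ ((2:ℝ)/(k:ℝ) - 2) / ‖1 - ξ * (α:ℂ)‖^4
        ≤ ∫ ξ in ball (0:ℂ) 1, (16 * Ww k ξ + 4 * h2f ξ) :=
          integral_mono_of_nonneg (ae_of_all _ fun ξ => by positivity)
            hBint.integrableOn hkey
      _ ≤ ∫ ξ : ℂ, (16 * Ww k ξ + 4 * h2f ξ) :=
          setIntegral_le_integral hBint (ae_of_all _ fun ξ => by
            have h1 := Ww_nonneg k ξ
            have h2 := hh2_nonneg ξ
            simp only [Pi.zero_apply]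
            linarith)
  have step3 : ∫ ξ : ℂ, (16 * Ww k ξ + 4 * h2f ξ)
      = 16 * (IFw k * IFw k) + 4 * ∫ ξ : ℂ, h2f ξ := by
    rw [integral_add ((Ww_integrable hk).const_mul 16) (hh2_int.const_mul 4),
      MeasureTheory.integral_const_mul, MeasureTheory.integral_const_mul, Ww_integral hk]
  have htrans : ∫ ξ : ℂ, h2f ξ = ∫ p : ℝ×ℝ, Hf p :=
    Complex.volume_preserving_equiv_real_prod.integral_comp
      Complex.measurableEquivRealProd.measurableEmbedding Hf
  have hfub : ∫ p : ℝ×ℝ, Hf p = ∫ x : ℝ, ∫ y : ℝ, Hf (x,y) := by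
    rw [Measure.volume_eq_prod]
    apply integral_prod
    rw [← Measure.volume_eq_prod]
    exact hHf_int
  have hinner_val : ∀ x : ℝ, (∫ y : ℝ, Hf (x,y))
      = (Icc (-1:ℝ) 1).indicator
          (fun x => ∫ y in Icc (-1:ℝ) 1, (((1-α*x)^2+(α*y)^2)^2)⁻¹) x := by
    intro x
    by_cases hx : x ∈ Icc (-1:ℝ) 1
    · rw [indicator_of_mem hx]
      have hfun : ∀ y, Hf (x,y)
          = (Icc (-1:ℝ) 1).indicator (fun y => (((1-α*x)^2+(α*y)^2)^2)⁻¹) y := by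
        intro y
        by_cases hy : y ∈ Icc (-1:ℝ) 1
        · rw [hHf_def, indicator_of_mem (show ((x,y) : ℝ×ℝ) ∈ _ ×ˢ _ from ⟨hx, hy⟩),
            indicator_of_mem hy]
        · rw [hHf_def,
            indicator_of_notMem (show ((x,y) : ℝ×ℝ) ∉ _ ×ˢ _ from fun hc => hy hc.2),
            indicator_of_notMem hy]
      simp_rw [hfun]
      rw [integral_indicator measurableSet_Icc]
    · rw [indicator_of_notMem hx]
      have hfun : ∀ y, Hf (x,y) = 0 := fun y =>
        indicator_of_notMem (fun hc => hx hc.1) _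
      simp [hfun]
  have houter : ∫ x : ℝ, ∫ y : ℝ, Hf (x,y) ≤ Real.pi/α * (((1-α)^2)⁻¹/α) := by
    have hm_int : Integrable
        ((Icc (-1:ℝ) 1).indicator (fun x => Real.pi/α * ((1-α*x)^3)⁻¹)) := by
      apply (integrable_indicator_iff measurableSet_Icc).2
      apply ContinuousOn.integrableOn_compact isCompact_Icc
      apply ContinuousOn.mul continuousOn_const
      apply ContinuousOn.inv₀ (by fun_prop)
      intro x hx
      apply pow_ne_zero
      rw [mem_Icc] at hx
      nlinarith [hx.1, hx.2]
    have hmono : ∀ x : ℝ, (∫ y : ℝ, Hf (x,y))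
        ≤ (Icc (-1:ℝ) 1).indicator (fun x => Real.pi/α * ((1-α*x)^3)⁻¹) x := by
      intro x
      rw [hinner_val x]
      by_cases hx : x ∈ Icc (-1:ℝ) 1
      · rw [indicator_of_mem hx, indicator_of_mem hx]
        have hx' := mem_Icc.1 hx
        have hu : (0:ℝ) < 1 - α*x := by nlinarith [hx'.1, hx'.2]
        calc ∫ y in Icc (-1:ℝ) 1, (((1-α*x)^2+(α*y)^2)^2)⁻¹
            ≤ Real.pi / ((1-α*x)^3 * α) := inner_bound hu hα0
          _ = Real.pi/α * ((1-α*x)^3)⁻¹ := by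
              rw [show Real.pi/((1-α*x)^3*α)
                  = Real.pi * ((1-α*x)^3)⁻¹ * α⁻¹ by
                rw [div_eq_mul_inv, mul_inv, mul_assoc]]
              ring
      · rw [indicator_of_notMem hx, indicator_of_notMem hx]
    calc ∫ x : ℝ, ∫ y : ℝ, Hf (x,y)
        ≤ ∫ x : ℝ, (Icc (-1:ℝ) 1).indicator (fun x => Real.pi/α * ((1-α*x)^3)⁻¹) x :=
          integral_mono_of_nonneg
            (ae_of_all _ fun x => integral_nonneg (fun y => hHf_nonneg _))
            hm_int (ae_of_all _ hmono)
      _ = ∫ x in Icc (-1:ℝ) 1, Real.pi/α * ((1-α*x)^3)⁻¹ :=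
          integral_indicator measurableSet_Icc
      _ = Real.pi/α * ∫ x in Icc (-1:ℝ) 1, ((1-α*x)^3)⁻¹ := by
          rw [MeasureTheory.integral_const_mul]
      _ ≤ Real.pi/α * (((1-α)^2)⁻¹/α) :=
          mul_le_mul_of_nonneg_left (outer_bound hα0 hα1) (by positivity)
  have hαb : Real.pi/α * (((1-α)^2)⁻¹/α) ≤ 4 * Real.pi * ((1-α)^2)⁻¹ := by
    rw [div_mul_div_comm, div_le_iff₀ (by positivity)]
    have hX : (0:ℝ) ≤ ((1-α)^2)⁻¹ := by positivity
    have h1 : (0:ℝ) ≤ 4*(α*α) - 1 := by nlinarith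
    have h2 : 0 ≤ (Real.pi * ((1-α)^2)⁻¹) * (4*(α*α) - 1) :=
      mul_nonneg (mul_nonneg Real.pi_pos.le hX) h1
    nlinarith [h2]
  have hh2tot : ∫ ξ : ℂ, h2f ξ ≤ 4 * Real.pi * ((1-α)^2)⁻¹ := by
    rw [htrans, hfub]
    linarith
  calc ∫ ξ in ball (0:ℂ) 1, ‖ξ‖ ^ ((2:ℝ)/(k:ℝ) - 2) / ‖1 - ξ * (α:ℂ)‖^4
      ≤ ∫ ξ : ℂ, (16 * Ww k ξ + 4 * h2f ξ) := step12
    _ = 16 * (IFw k * IFw k) + 4 * ∫ ξ : ℂ, h2f ξ := step3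
    _ ≤ 16 * (IFw k * IFw k) + 16 * Real.pi * ((1-α)^2)⁻¹ := by linarith



lemma rot_eq {s : ℝ} {a : ℂ} (h0 : a ≠ 0) :
    ∫ ξ in ball (0:ℂ) 1, ‖ξ‖ ^ s / ‖1 - ξ * a‖^4
      = ∫ ξ in ball (0:ℂ) 1, ‖ξ‖ ^ s / ‖1 - ξ * ((‖a‖ : ℝ):ℂ)‖^4 := by
  set α : ℝ := ‖a‖ with hα
  have h1 : ‖(starRingEnd ℂ) a / (α:ℂ)‖ = 1 := by
    rw [norm_div, RCLike.norm_conj]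
    simp only [Complex.norm_real, hα, abs_norm, norm_norm]
    rw [div_self (norm_ne_zero_iff.mpr h0)]
  set u : Circle := ⟨(starRingEnd ℂ) a / (α:ℂ), by
    show _ ∈ Metric.sphere (0:ℂ) 1
    exact mem_sphere_zero_iff_norm.mpr h1⟩ with hu
  have hcoe : (↑u : ℂ) = (starRingEnd ℂ) a / (α:ℂ) := rfl
  have hmp : MeasurePreserving (⇑(rotation u)) volume volume :=
    (rotation u).measurePreserving
  have hemb : MeasurableEmbedding (⇑(rotation u)) :=
    (rotation u).toHomeomorph.measurableEmbedding
  have hpre : ⇑(rotation u) ⁻¹' (ball (0:ℂ) 1) = ball 0 1 := by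
    ext η
    simp [mem_ball, dist_eq_norm, rotation_apply, norm_mul, map_zero, h1, hcoe]
  have hmul : ∀ η : ℂ, (↑u : ℂ) * η * a = η * (α:ℂ) := by
    intro η
    rw [hcoe]
    have hns : (starRingEnd ℂ) a * a = ((α:ℂ))^2 := by
      rw [mul_comm, Complex.mul_conj]
      rw [Complex.normSq_eq_norm_sq]
      push_cast [hα]
      norm_num
    have hαne : ((α:ℝ):ℂ) ≠ 0 := Complex.ofReal_ne_zero.mpr (by simpa [hα] using h0)
    field_simp
    rw [show (starRingEnd ℂ) a * η * a = ((starRingEnd ℂ) a * a) * η by ring, hns]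
  have h := hmp.setIntegral_preimage_emb hemb
    (fun ξ => ‖ξ‖ ^ s / ‖1 - ξ * a‖^4) (ball (0:ℂ) 1)
  rw [hpre] at h
  rw [← h]
  apply setIntegral_congr_fun measurableSet_ball
  intro η _
  simp only [rotation_apply]
  have hn : ‖(↑u:ℂ) * η‖ = ‖η‖ := by
    rw [norm_mul, show ‖(↑u:ℂ)‖ = 1 from hcoe ▸ h1, one_mul]
  rw [hn, hmul η]


end ForelliAux

end

open ForelliAux Set Metric in
/-- Forelli–Rudin type estimate: for `a` in the unit disk and integer `k ≥ 1`,
`J(a) = ∫_𝔻 |ξ|^{2/k-2} / |1-ξa|⁴ dA(ξ) ≤ C (1-|a|²)^{-2}` with `C = C(k)`. -/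
theorem stmt2 (k : ℕ) (hk : 1 ≤ k) :
    ∃ C : ℝ, 0 < C ∧ ∀ a : ℂ, ‖a‖ < 1 →
      (∫ ξ in Metric.ball (0 : ℂ) 1, ‖ξ‖ ^ ((2 : ℝ) / k - 2) / ‖1 - ξ * a‖ ^ 4)
        ≤ C * (1 - ‖a‖ ^ 2) ^ (-2 : ℝ) := by
  have hIF := IFw_nonneg k
  have hpi := Real.pi_pos
  refine ⟨16 * (IFw k * IFw k) + 64 * Real.pi + 1, by nlinarith, ?_⟩
  intro a ha
  have hna := norm_nonneg a
  have hlt : (0:ℝ) < 1 - ‖a‖^2 := by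
    nlinarith [mul_pos (by linarith : (0:ℝ) < 1 - ‖a‖) (by linarith : (0:ℝ) < 1 + ‖a‖)]
  have hT : (1 - ‖a‖^2) ^ (-2:ℝ) = ((1 - ‖a‖^2)^2)⁻¹ := by
    rw [show ((-2:ℝ)) = -((2:ℕ):ℝ) by norm_num,
      Real.rpow_neg hlt.le, Real.rpow_natCast]
  have hxpos : (0:ℝ) < (1 - ‖a‖^2)^2 := by positivity
  have hT1 : 1 ≤ ((1 - ‖a‖^2)^2)⁻¹ := by
    rw [one_le_inv_iff₀]
    refine ⟨hxpos, ?_⟩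
    nlinarith [sq_nonneg ‖a‖]
  have hTnn : (0:ℝ) ≤ ((1 - ‖a‖^2)^2)⁻¹ := by positivity
  rw [hT]
  rcases le_or_gt ‖a‖ (1/2) with hc | hc
  · calc ∫ ξ in ball (0:ℂ) 1, ‖ξ‖ ^ ((2:ℝ)/(k:ℝ) - 2) / ‖1 - ξ * a‖^4
        ≤ 16 * (IFw k * IFw k) := boundA hk hc
      _ ≤ (16 * (IFw k * IFw k) + 64 * Real.pi + 1) * 1 := by
          rw [mul_one]
          linarith
      _ ≤ (16 * (IFw k * IFw k) + 64 * Real.pi + 1) * ((1 - ‖a‖^2)^2)⁻¹ := by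
          apply mul_le_mul_of_nonneg_left hT1
          nlinarith [mul_self_nonneg (IFw k)]
  · have h0 : a ≠ 0 := by
      intro h
      rw [h, norm_zero] at hc
      linarith
    rw [rot_eq h0]
    have hB := boundB hk hc ha
    have hd : ((1-‖a‖)^2)⁻¹ ≤ 4 * ((1 - ‖a‖^2)^2)⁻¹ := by
      have hq : ((1-‖a‖^2)^2)/4 ≤ (1-‖a‖)^2 := by
        have hfac : (1-‖a‖^2)^2 = (1-‖a‖)^2 * (1+‖a‖)^2 := by ring
        have h4 : (1+‖a‖)^2 ≤ 4 := by nlinarith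
        rw [hfac]
        nlinarith [sq_nonneg (1-‖a‖)]
      have hqpos : (0:ℝ) < ((1-‖a‖^2)^2)/4 := by positivity
      calc ((1-‖a‖)^2)⁻¹ ≤ (((1-‖a‖^2)^2)/4)⁻¹ := inv_anti₀ hqpos hq
        _ = 4 * ((1 - ‖a‖^2)^2)⁻¹ := by
            rw [inv_div]
            ring
    have e1 : 16 * (IFw k * IFw k) ≤ 16 * (IFw k * IFw k) * ((1 - ‖a‖^2)^2)⁻¹ := by
      nlinarith [mul_self_nonneg (IFw k)]
    have e2 : 16 * Real.pi * ((1-‖a‖)^2)⁻¹ ≤ 64 * Real.pi * ((1 - ‖a‖^2)^2)⁻¹ := by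
      calc 16 * Real.pi * ((1-‖a‖)^2)⁻¹
          ≤ 16 * Real.pi * (4 * ((1 - ‖a‖^2)^2)⁻¹) :=
            mul_le_mul_of_nonneg_left hd (by positivity)
        _ = 64 * Real.pi * ((1 - ‖a‖^2)^2)⁻¹ := by ring
    have expand : (16 * (IFw k * IFw k) + 64 * Real.pi + 1) * ((1 - ‖a‖^2)^2)⁻¹
        = 16 * (IFw k * IFw k) * ((1 - ‖a‖^2)^2)⁻¹
          + 64 * Real.pi * ((1 - ‖a‖^2)^2)⁻¹ + ((1 - ‖a‖^2)^2)⁻¹ := by ring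
    linarith [hB, e1, e2, hTnn]
end

section
/- Let ℍ_k be the fat Hartogs triangle and let 𝒫(z,w) = z₂conj(w₂)/((1-z₂conj(w₂))²(z₂conj(w₂)-(z₁conj(w₁))^k)²). Define R(z,w) = q_k(s) + p_k(s)t + (s^k/t)p_k(s) with s = z₁conj(w₁), t = z₂conj(w₂). Then for each fixed w ∈ ℍ_k, the function z ↦ R(z,w) is holomorphic on ℍ_k, and R(w,w) ≥ 1 for all w ∈ ℍ_k. -/
open Complex ComplexConjugate

/-- The fat Hartogs triangle `ℍ_k`. -/
def hartogsTriangle (k : ℕ) : Set (ℂ × ℂ) :=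
  {z | ‖z.1‖ ^ k < ‖z.2‖ ∧ ‖z.2‖ < 1}

/-- `p_k(s) = Σ_{j=1}^{k-1} j(k-j) s^{j-1}` (`p₁ ≡ 0`). -/
noncomputable def pPoly (k : ℕ) (s : ℂ) : ℂ :=
  ∑ j ∈ Finset.Ico 1 k, ((j * (k - j) : ℕ) : ℂ) * s ^ (j - 1)

/-- `q_k(s) = Σ_{j=1}^{k} (j² + (k-j)² s^k) s^{j-1}`. -/
noncomputable def qPoly (k : ℕ) (s : ℂ) : ℂ :=
  ∑ j ∈ Finset.Icc 1 k, (((j ^ 2 : ℕ) : ℂ) + (((k - j) ^ 2 : ℕ) : ℂ) * s ^ k) * s ^ (j - 1)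

/-- `R(z,w) = q_k(s) + p_k(s) t + (s^k/t) p_k(s)`, `s = z₁·conj w₁`, `t = z₂·conj w₂`. -/
noncomputable def Rker (k : ℕ) (z w : ℂ × ℂ) : ℂ :=
  let s := z.1 * conj w.1
  let t := z.2 * conj w.2
  qPoly k s + pPoly k s * t + s ^ k / t * pPoly k s

noncomputable def pR (k : ℕ) (x : ℝ) : ℝ :=
  ∑ j ∈ Finset.Ico 1 k, ((j * (k - j) : ℕ) : ℝ) * x ^ (j - 1)

noncomputable def qR (k : ℕ) (x : ℝ) : ℝ :=
  ∑ j ∈ Finset.Icc 1 k, (((j ^ 2 : ℕ) : ℝ) + (((k - j) ^ 2 : ℕ) : ℝ) * x ^ k) * x ^ (j - 1)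

lemma pPoly_ofReal (k : ℕ) (x : ℝ) : pPoly k (x : ℂ) = ((pR k x : ℝ) : ℂ) := by
  simp [pPoly, pR]

lemma qPoly_ofReal (k : ℕ) (x : ℝ) : qPoly k (x : ℂ) = ((qR k x : ℝ) : ℂ) := by
  simp [qPoly, qR]

lemma pR_nonneg (k : ℕ) {x : ℝ} (hx : 0 ≤ x) : 0 ≤ pR k x := by
  apply Finset.sum_nonneg
  intro j _
  positivity

lemma qR_ge_one (k : ℕ) (hk : 1 ≤ k) {x : ℝ} (hx : 0 ≤ x) : 1 ≤ qR k x := by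
  have h1 : (1 : ℕ) ∈ Finset.Icc 1 k := Finset.mem_Icc.mpr ⟨le_refl 1, hk⟩
  have hle : (((1 ^ 2 : ℕ) : ℝ) + (((k - 1) ^ 2 : ℕ) : ℝ) * x ^ k) * x ^ (1 - 1) ≤ qR k x := by
    apply Finset.single_le_sum (f := fun j => (((j ^ 2 : ℕ) : ℝ) + (((k - j) ^ 2 : ℕ) : ℝ) * x ^ k) * x ^ (j - 1)) _ h1
    intro j _
    positivity
  have : (1 : ℝ) ≤ (((1 ^ 2 : ℕ) : ℝ) + (((k - 1) ^ 2 : ℕ) : ℝ) * x ^ k) * x ^ (1 - 1) := by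
    norm_num
    nlinarith [pow_nonneg hx k, Nat.cast_nonneg (α := ℝ) ((k - 1) ^ 2)]
  linarith

/-- For each fixed `w ∈ ℍ_k`, `z ↦ R(z,w)` is holomorphic on `ℍ_k`, and `R(w,w)` is a
real number `≥ 1`. -/
theorem stmt11 (k : ℕ) (hk : 1 ≤ k) :
    ∀ w ∈ hartogsTriangle k,
      DifferentiableOn ℂ (fun z => Rker k z w) (hartogsTriangle k) ∧
      (Rker k w w).im = 0 ∧ 1 ≤ (Rker k w w).re := by
  intro w hw
  obtain ⟨hw1, hw2⟩ := hw
  have hw2ne : w.2 ≠ 0 := by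
    intro h
    rw [h] at hw1
    simp at hw1
    exact absurd hw1 (not_lt.mpr (by positivity))
  refine ⟨?_, ?_, ?_⟩
  · -- differentiability
    have hp : Differentiable ℂ (fun z : ℂ × ℂ => pPoly k (z.1 * conj w.1)) := by
      unfold pPoly
      apply Differentiable.fun_sum
      intro j _
      apply Differentiable.const_mul
      apply Differentiable.pow
      exact (differentiable_fst).mul_const _
    have hq : Differentiable ℂ (fun z : ℂ × ℂ => qPoly k (z.1 * conj w.1)) := by
      unfold qPoly
      apply Differentiable.fun_sum
      intro j _
      apply Differentiable.mul
      · apply Differentiable.add (differentiable_const _)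
        exact ((differentiable_fst.mul_const _).pow k).const_mul _
      · exact (differentiable_fst.mul_const _).pow _
    intro z hz
    obtain ⟨hz1, hz2⟩ := hz
    have hz2ne : z.2 ≠ 0 := by
      intro h
      rw [h] at hz1
      simp at hz1
      exact absurd hz1 (not_lt.mpr (by positivity))
    have htne : z.2 * conj w.2 ≠ 0 :=
      mul_ne_zero hz2ne (by simpa using hw2ne)
    apply DifferentiableAt.differentiableWithinAt
    show DifferentiableAt ℂ (fun z : ℂ × ℂ =>
      qPoly k (z.1 * conj w.1) + pPoly k (z.1 * conj w.1) * (z.2 * conj w.2) +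
        (z.1 * conj w.1) ^ k / (z.2 * conj w.2) * pPoly k (z.1 * conj w.1)) z
    apply DifferentiableAt.add
    apply DifferentiableAt.add
    · exact hq.differentiableAt
    · exact (hp.differentiableAt).mul ((differentiable_snd.mul_const _).differentiableAt)
    · apply DifferentiableAt.mul _ hp.differentiableAt
      simp only [div_eq_mul_inv]
      exact ((differentiable_fst.mul_const _).pow k).differentiableAt.mul
        (((differentiable_snd.mul_const _).differentiableAt).inv htne)
  all_goals {
    have hb : (0:ℝ) < Complex.normSq w.2 := by
      rwa [Complex.normSq_pos]
    have key : Rker k w w =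
        ((qR k (Complex.normSq w.1) + pR k (Complex.normSq w.1) * Complex.normSq w.2 +
          (Complex.normSq w.1) ^ k / Complex.normSq w.2 * pR k (Complex.normSq w.1) : ℝ) : ℂ) := by
      show qPoly k (w.1 * conj w.1) + pPoly k (w.1 * conj w.1) * (w.2 * conj w.2) +
        (w.1 * conj w.1) ^ k / (w.2 * conj w.2) * pPoly k (w.1 * conj w.1) = _
      rw [Complex.mul_conj, Complex.mul_conj, pPoly_ofReal, qPoly_ofReal]
      push_cast
      ring
    rw [key]
    first
    | exact Complex.ofReal_im _
    | · rw [Complex.ofReal_re]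
        have ha : (0:ℝ) ≤ Complex.normSq w.1 := Complex.normSq_nonneg _
        have hq1 := qR_ge_one k hk ha
        have hp0 := pR_nonneg k ha
        have h2 : 0 ≤ pR k (Complex.normSq w.1) * Complex.normSq w.2 := by positivity
        have h3 : 0 ≤ (Complex.normSq w.1) ^ k / Complex.normSq w.2 * pR k (Complex.normSq w.1) := by positivity
        linarith
  }
end

section
/- Take k = 2 and the sequences z_j = (-(1-1/j), 1-1/j), w_j = ((1-1/j), 1-1/j) in ℍ₂ = {(z₁,z₂) : |z₁|² < |z₂| < 1}. Then (a) the pseudo-hyperbolic conditions |((z_{j,1}²/z_{j,2}) - (w_{j,1}²/w_{j,2}))/(1 - z_{j,1}²conj(w_{j,1})²/(z_{j,2}conj(w_{j,2})))| < 1/e and |(z_{j,2}-w_{j,2})/(1-z_{j,2}conj(w_{j,2}))| < 1/e hold for all large j (in fact the first quantity is 0 and the second is 0), while (b) the Skwarczyński quantity d_S(z_j,w_j) = (1 - |K(z_j,w_j)|/(√K(z_j,z_j)√K(w_j,w_j)))^{1/2} tends to 1 as j → ∞, where K is the Bergman kernel of ℍ₂ given by K(z,w) = ((1+4s+s²)t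 + s² + t²)/(2π²(1-t)²(t-s²)²) with s = z₁conj(w₁), t = z₂conj(w₂). -/
open Complex ComplexConjugate Filter

/-- The fat Hartogs triangle `ℍ₂ = {(z₁,z₂) : |z₁|² < |z₂| < 1}`. -/
def hartogsTriangle2 : Set (ℂ × ℂ) :=
  {z | ‖z.1‖ ^ 2 < ‖z.2‖ ∧ ‖z.2‖ < 1}

/-- Edholm's Bergman kernel of `ℍ₂`: `K(z,w) = ((1+4s+s²)t + s² + t²)/(2π²(1-t)²(t-s²)²)`. -/
noncomputable def bergmanH2 (z w : ℂ × ℂ) : ℂ :=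
  let s := z.1 * conj w.1
  let t := z.2 * conj w.2
  ((1 + 4 * s + s ^ 2) * t + s ^ 2 + t ^ 2) /
    (2 * (Real.pi : ℂ) ^ 2 * (1 - t) ^ 2 * (t - s ^ 2) ^ 2)

noncomputable def zseq (j : ℕ) : ℂ × ℂ := (-(1 - 1 / (j : ℂ)), 1 - 1 / (j : ℂ))
noncomputable def wseq (j : ℕ) : ℂ × ℂ := (1 - 1 / (j : ℂ), 1 - 1 / (j : ℂ))

lemma kzw_aux (a : ℝ) (h0 : 0 < a) (h1 : a < 1) :
    bergmanH2 (-(a:ℂ), (a:ℂ)) ((a:ℂ), (a:ℂ)) =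
      ((1/(2*Real.pi^2*a^2*(1-a^2)^2) : ℝ) : ℂ) := by
  have hπ : (Real.pi : ℂ) ≠ 0 := by exact_mod_cast Real.pi_ne_zero
  have ha : (a:ℂ) ≠ 0 := by exact_mod_cast h0.ne'
  have h2 : 1 - (a:ℂ)^2 ≠ 0 := by
    have : (1 - a^2 : ℝ) ≠ 0 := by nlinarith
    exact_mod_cast this
  simp only [bergmanH2, Complex.conj_ofReal]
  push_cast
  rw [div_eq_div_iff]
  · ring
  · rw [show (2 * (Real.pi:ℂ) ^ 2 * (1 - (a:ℂ) * (a:ℂ)) ^ 2 *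
        ((a:ℂ) * (a:ℂ) - (-(a:ℂ) * (a:ℂ)) ^ 2) ^ 2) =
      2 * (Real.pi:ℂ)^2 * (1 - (a:ℂ)^2)^2 * ((a:ℂ)^2)^2 * (1 - (a:ℂ)^2)^2 by ring]
    exact mul_ne_zero (mul_ne_zero (mul_ne_zero (mul_ne_zero two_ne_zero
      (pow_ne_zero 2 hπ)) (pow_ne_zero 2 h2)) (pow_ne_zero 2 (pow_ne_zero 2 ha)))
      (pow_ne_zero 2 h2)
  · rw [show (2 * (Real.pi:ℂ) ^ 2 * (a:ℂ) ^ 2 * (1 - (a:ℂ) ^ 2) ^ 2) =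
      2 * (Real.pi:ℂ)^2 * (a:ℂ)^2 * (1 - (a:ℂ)^2)^2 by ring]
    exact mul_ne_zero (mul_ne_zero (mul_ne_zero two_ne_zero (pow_ne_zero 2 hπ))
      (pow_ne_zero 2 ha)) (pow_ne_zero 2 h2)

lemma kdiag_aux (a : ℝ) (h0 : 0 < a) (h1 : a < 1) (c : ℂ)
    (hc : c * conj c = (a:ℂ)^2) :
    bergmanH2 (c, (a:ℂ)) (c, (a:ℂ)) =
      (((1+6*a^2+a^4)/(2*Real.pi^2*a^2*(1-a^2)^4) : ℝ) : ℂ) := by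
  have hπ : (Real.pi : ℂ) ≠ 0 := by exact_mod_cast Real.pi_ne_zero
  have ha : (a:ℂ) ≠ 0 := by exact_mod_cast h0.ne'
  have h2 : 1 - (a:ℂ)^2 ≠ 0 := by
    have : (1 - a^2 : ℝ) ≠ 0 := by nlinarith
    exact_mod_cast this
  simp only [bergmanH2, Complex.conj_ofReal]
  rw [hc]
  push_cast
  rw [div_eq_div_iff]
  · ring
  · rw [show (2 * (Real.pi:ℂ) ^ 2 * (1 - (a:ℂ) * (a:ℂ)) ^ 2 *
        ((a:ℂ) * (a:ℂ) - ((a:ℂ)^2) ^ 2) ^ 2) =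
      2 * (Real.pi:ℂ)^2 * (1 - (a:ℂ)^2)^2 * ((a:ℂ)^2)^2 * (1 - (a:ℂ)^2)^2 by ring]
    exact mul_ne_zero (mul_ne_zero (mul_ne_zero (mul_ne_zero two_ne_zero
      (pow_ne_zero 2 hπ)) (pow_ne_zero 2 h2)) (pow_ne_zero 2 (pow_ne_zero 2 ha)))
      (pow_ne_zero 2 h2)
  · rw [show (2 * (Real.pi:ℂ) ^ 2 * (a:ℂ) ^ 2 * (1 - (a:ℂ) ^ 2) ^ 4) =
      2 * (Real.pi:ℂ)^2 * (a:ℂ)^2 * ((1 - (a:ℂ)^2)^2)^2 by ring]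
    exact mul_ne_zero (mul_ne_zero (mul_ne_zero two_ne_zero (pow_ne_zero 2 hπ))
      (pow_ne_zero 2 ha)) (pow_ne_zero 2 (pow_ne_zero 2 h2))

lemma ratio_aux (a : ℝ) (h0 : 0 < a) (h1 : a < 1) :
    ‖bergmanH2 (-(a:ℂ), (a:ℂ)) ((a:ℂ), (a:ℂ))‖ /
      (Real.sqrt ((bergmanH2 (-(a:ℂ), (a:ℂ)) (-(a:ℂ), (a:ℂ))).re) *
        Real.sqrt ((bergmanH2 ((a:ℂ), (a:ℂ)) ((a:ℂ), (a:ℂ))).re)) =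
      (1 - a^2)^2 / (1 + 6*a^2 + a^4) := by
  have hπ := Real.pi_pos
  have h2 : (0:ℝ) < 1 - a^2 := by nlinarith
  have hca : (-(a:ℂ)) * conj (-(a:ℂ)) = (a:ℂ)^2 := by
    simp [Complex.conj_ofReal]; ring
  have hcb : ((a:ℂ)) * conj ((a:ℂ)) = (a:ℂ)^2 := by
    simp [Complex.conj_ofReal]; ring
  rw [kzw_aux a h0 h1, kdiag_aux a h0 h1 _ hca, kdiag_aux a h0 h1 _ hcb]
  rw [Complex.norm_real, Complex.ofReal_re]
  have hR : (0:ℝ) ≤ (1+6*a^2+a^4)/(2*Real.pi^2*a^2*(1-a^2)^4) := by positivity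
  rw [Real.mul_self_sqrt hR]
  rw [Real.norm_eq_abs, abs_of_pos (by positivity)]
  have hx : (1:ℝ) + 6*a^2 + a^4 > 0 := by positivity
  field_simp

/-- For `z_j = (-(1-1/j), 1-1/j)` and `w_j = ((1-1/j), 1-1/j)` in `ℍ₂`, the two
pseudo-hyperbolic quantities are `< 1/e` (indeed both vanish), yet the Skwarczyński
quantity `d_S(z_j,w_j)` tends to `1`. -/
theorem stmt17 :
    (∀ j : ℕ, 2 ≤ j → zseq j ∈ hartogsTriangle2 ∧ wseq j ∈ hartogsTriangle2) ∧
    (∀ j : ℕ, 2 ≤ j →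
      ‖((zseq j).1 ^ 2 / (zseq j).2 - (wseq j).1 ^ 2 / (wseq j).2) /
          (1 - (zseq j).1 ^ 2 * conj ((wseq j).1) ^ 2 /
              ((zseq j).2 * conj ((wseq j).2)))‖ < 1 / Real.exp 1 ∧
      ‖((zseq j).2 - (wseq j).2) / (1 - (zseq j).2 * conj ((wseq j).2))‖
        < 1 / Real.exp 1) ∧
    Tendsto
      (fun j : ℕ =>
        Real.sqrt (1 - ‖bergmanH2 (zseq j) (wseq j)‖ /
          (Real.sqrt ((bergmanH2 (zseq j) (zseq j)).re) *
            Real.sqrt ((bergmanH2 (wseq j) (wseq j)).re))))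
      atTop (nhds 1) := by
  -- basic facts about a_j = 1 - 1/j
  have hA : ∀ j : ℕ, 2 ≤ j → 0 < 1 - 1/(j:ℝ) ∧ 1 - 1/(j:ℝ) < 1 := by
    intro j hj
    have hj2 : (2:ℝ) ≤ (j:ℝ) := by exact_mod_cast hj
    have hjpos : (0:ℝ) < (j:ℝ) := by linarith
    constructor
    · have : 1/(j:ℝ) ≤ 1/2 := by
        apply one_div_le_one_div_of_le <;> linarith
      linarith
    · have : 0 < 1/(j:ℝ) := by positivity
      linarith
  have hcast : ∀ j : ℕ, ((1 - 1/(j:ℝ) : ℝ) : ℂ) = 1 - 1/(j:ℂ) := by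
    intro j; push_cast; ring
  have hz : ∀ j : ℕ, zseq j = (-(((1 - 1/(j:ℝ) : ℝ)):ℂ), (((1 - 1/(j:ℝ) : ℝ)):ℂ)) := by
    intro j; rw [zseq, hcast]
  have hw : ∀ j : ℕ, wseq j = ((((1 - 1/(j:ℝ) : ℝ)):ℂ), (((1 - 1/(j:ℝ) : ℝ)):ℂ)) := by
    intro j; rw [wseq, hcast]
  refine ⟨?_, ?_, ?_⟩
  · intro j hj
    obtain ⟨h0, h1⟩ := hA j hj
    set a := 1 - 1/(j:ℝ) with ha
    have hnorm : ‖((a:ℝ):ℂ)‖ = a := by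
      rw [Complex.norm_real, Real.norm_eq_abs, abs_of_pos h0]
    constructor
    · show ‖(zseq j).1‖ ^ 2 < ‖(zseq j).2‖ ∧ ‖(zseq j).2‖ < 1
      rw [hz j]
      simp only [norm_neg]
      rw [hnorm]
      exact ⟨by nlinarith, h1⟩
    · show ‖(wseq j).1‖ ^ 2 < ‖(wseq j).2‖ ∧ ‖(wseq j).2‖ < 1
      rw [hw j]
      simp only []
      rw [hnorm]
      exact ⟨by nlinarith, h1⟩
  · intro j hj
    have hexp : (0:ℝ) < 1 / Real.exp 1 := by positivity
    constructor
    · have hnum : (zseq j).1 ^ 2 / (zseq j).2 - (wseq j).1 ^ 2 / (wseq j).2 = 0 := by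
        simp only [zseq, wseq]; ring_nf
      rw [hnum, zero_div, norm_zero]
      exact hexp
    · have hnum : (zseq j).2 - (wseq j).2 = 0 := by simp [zseq, wseq]
      rw [hnum, zero_div, norm_zero]
      exact hexp
  · -- the limit
    have hAt : Tendsto (fun j : ℕ => 1 - 1/(j:ℝ)) atTop (nhds 1) := by
      have : Tendsto (fun n : ℕ => 1 / (n:ℝ)) atTop (nhds 0) := tendsto_one_div_atTop_nhds_zero_nat
      simpa using tendsto_const_nhds.sub this
    have hg : Tendsto (fun j : ℕ =>
        (1 - (1 - 1/(j:ℝ))^2)^2 / (1 + 6*(1 - 1/(j:ℝ))^2 + (1 - 1/(j:ℝ))^4))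
        atTop (nhds 0) := by
      have hc : ContinuousAt (fun x : ℝ => (1 - x^2)^2 / (1 + 6*x^2 + x^4)) 1 := by
        apply ContinuousAt.div
        · fun_prop
        · fun_prop
        · norm_num
      have := hc.tendsto.comp hAt
      simp only [Function.comp_def] at this
      convert this using 2
      norm_num
    have hfinal : Tendsto (fun j : ℕ => Real.sqrt (1 -
        (1 - (1 - 1/(j:ℝ))^2)^2 / (1 + 6*(1 - 1/(j:ℝ))^2 + (1 - 1/(j:ℝ))^4)))
        atTop (nhds 1) := by
      have h1 : Tendsto (fun j : ℕ => 1 -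
          (1 - (1 - 1/(j:ℝ))^2)^2 / (1 + 6*(1 - 1/(j:ℝ))^2 + (1 - 1/(j:ℝ))^4))
          atTop (nhds 1) := by
        simpa using tendsto_const_nhds.sub hg
      have := (Real.continuous_sqrt.continuousAt (x := (1:ℝ))).tendsto.comp h1
      simpa [Function.comp_def, Real.sqrt_one] using this
    refine hfinal.congr' ?_
    filter_upwards [eventually_ge_atTop 2] with j hj
    obtain ⟨h0, h1⟩ := hA j hj
    rw [hz j, hw j, ratio_aux _ h0 h1]
end
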